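/- Let X be a real random variable symmetric about 0 whose characteristic function φ_X is absolutely integrable. Then the characteristic function of |X| satisfies φ_{|X|}(t) = φ_X(t) + i·H{φ_X}(t), where H denotes the Hilbert transform; in particular the imaginary part of φ_{|X|} equals the Hilbert transform of its real part (the analytic signal property). -/

import Mathlib

open MeasureTheory Filter Set

noncomputable def sinc (v : ℝ) : ℝ := Real.sin v / v

noncomputable def Si (x : ℝ) : ℝ := ∫ v in (0:ℝ)..x, sinc v

lemma sinc_abs_le_one (v : ℝ) : |sinc v| ≤ 1 := by
  rcases eq_or_ne v 0 with h | h
  · simp [sinc, h]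
  · rw [sinc, abs_div, div_le_one (abs_pos.2 h)]
    exact Real.abs_sin_le_abs

lemma sinc_measurable : Measurable sinc :=
  Real.measurable_sin.div measurable_id

lemma sinc_intervalIntegrable (a b : ℝ) : IntervalIntegrable sinc volume a b := by
  refine (intervalIntegrable_const (c := (1:ℝ))).mono_fun
    sinc_measurable.aestronglyMeasurable.restrict ?_
  filter_upwards with v
  simpa [Real.norm_eq_abs] using sinc_abs_le_one v

lemma Si_continuous : Continuous Si :=
  intervalIntegral.continuous_primitive sinc_intervalIntegrable 0

lemma Si_abs_le {x : ℝ} (hx : 0 ≤ x) : |Si x| ≤ x := by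
  have h := intervalIntegral.norm_integral_le_of_norm_le_const
    (C := 1) (f := sinc) (a := 0) (b := x)
    (fun v _ => by simpa [Real.norm_eq_abs] using sinc_abs_le_one v)
  simpa [Real.norm_eq_abs, abs_of_nonneg hx, Si] using h

lemma Si_neg (x : ℝ) : Si (-x) = -Si x := by
  have h : (fun v => sinc (-v)) = sinc := funext fun v => by simp [sinc, neg_div_neg_eq]
  rw [Si, ← h, intervalIntegral.integral_comp_neg, neg_zero, neg_neg,
    intervalIntegral.integral_symm, Si]

lemma inner_exp (τ R : ℝ) :
    ∫ v in (0:ℝ)..R, Real.sin v * Real.exp (-(τ * v)) =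
      (1 - Real.exp (-(τ * R)) * (Real.cos R + τ * Real.sin R)) / (1 + τ ^ 2) := by
  have hτ2 : (1 : ℝ) + τ ^ 2 ≠ 0 := by positivity
  have hder : ∀ v ∈ Set.uIcc (0:ℝ) R,
      HasDerivAt (fun v : ℝ => -(Real.exp (-(τ * v)) * (τ * Real.sin v + Real.cos v)) / (1 + τ ^ 2))
        (Real.sin v * Real.exp (-(τ * v))) v := by
    intro v _
    have h1 : HasDerivAt (fun v : ℝ => Real.exp (-(τ * v))) (-τ * Real.exp (-(τ * v))) v := by
      have := (Real.hasDerivAt_exp (-(τ * v))).comp v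
        (((hasDerivAt_id v).const_mul τ).neg)
      exact this.congr_deriv (by ring)
    have h2 : HasDerivAt (fun v : ℝ => τ * Real.sin v + Real.cos v)
        (τ * Real.cos v - Real.sin v) v := by
      exact (((Real.hasDerivAt_sin v).const_mul τ).add (Real.hasDerivAt_cos v)).congr_deriv (by ring)
    have h3 := (h1.mul h2).neg.div_const (1 + τ ^ 2)
    refine h3.congr_deriv ?_
    field_simp
    ring
  have hcont : IntervalIntegrable (fun v => Real.sin v * Real.exp (-(τ * v))) volume 0 R :=
    (Real.continuous_sin.mul (Real.continuous_exp.comp (by fun_prop))).intervalIntegrable 0 R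
  rw [intervalIntegral.integral_eq_sub_of_hasDerivAt hder hcont]
  field_simp
  simp only [mul_zero, neg_zero, Real.exp_zero, Real.sin_zero, Real.cos_zero]
  ring

lemma exp_neg_mul_integral {c : ℝ} (hc : 0 < c) :
    ∫ τ in Set.Ioi (0:ℝ), Real.exp (-(c * τ)) = c⁻¹ := by
  have h := integral_comp_mul_left_Ioi (fun y => Real.exp (-y)) 0 hc
  simp only [mul_zero, integral_exp_neg_Ioi_zero, smul_eq_mul, mul_one] at h
  exact h


lemma E_abs_le (R : ℝ) (τ : ℝ) (hτ : 0 < τ) :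
    |Real.exp (-(τ * R)) * (Real.cos R + τ * Real.sin R) / (1 + τ ^ 2)| ≤
      2 * Real.exp (-(τ * R)) := by
  have h1 : (0:ℝ) < 1 + τ ^ 2 := by positivity
  rw [abs_div, abs_of_pos h1, abs_mul, Real.abs_exp, div_le_iff₀ h1]
  have h2 : |Real.cos R + τ * Real.sin R| ≤ 1 + τ := by
    have ha := abs_add_le (Real.cos R) (τ * Real.sin R)
    have h4 : |τ * Real.sin R| ≤ τ := by
      rw [abs_mul, abs_of_pos hτ]
      nlinarith [Real.abs_sin_le_one R, hτ.le, abs_nonneg (Real.sin R)]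
    nlinarith [Real.abs_cos_le_one R]
  have h3 : 1 + τ ≤ 2 * (1 + τ ^ 2) := by nlinarith
  calc Real.exp (-(τ * R)) * |Real.cos R + τ * Real.sin R|
      ≤ Real.exp (-(τ * R)) * (2 * (1 + τ ^ 2)) := by
        gcongr; exact h2.trans h3
    _ = 2 * Real.exp (-(τ * R)) * (1 + τ ^ 2) := by ring

lemma E_integrable {R : ℝ} (hR : 0 < R) :
    IntegrableOn
      (fun τ => Real.exp (-(τ * R)) * (Real.cos R + τ * Real.sin R) / (1 + τ ^ 2))
      (Set.Ioi (0:ℝ)) := by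
  have hg : IntegrableOn (fun τ => 2 * Real.exp (-(τ * R))) (Set.Ioi (0:ℝ)) := by
    have := (exp_neg_integrableOn_Ioi 0 hR).const_mul (2:ℝ)
    simpa [mul_comm, neg_mul, IntegrableOn] using this
  refine hg.mono' ?_ ?_
  · refine (Continuous.aestronglyMeasurable ?_).restrict
    exact Continuous.div (by fun_prop) (by fun_prop) (fun τ => by positivity)
  · filter_upwards [ae_restrict_mem measurableSet_Ioi] with τ hτ
    rw [Real.norm_eq_abs]
    exact E_abs_le R τ hτ

lemma Si_eq {R : ℝ} (hR : 0 < R) :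
    Si R = Real.pi / 2 -
      ∫ τ in Set.Ioi (0:ℝ),
        Real.exp (-(τ * R)) * (Real.cos R + τ * Real.sin R) / (1 + τ ^ 2) := by
  have hmeas : AEStronglyMeasurable
      (Function.uncurry fun v τ => Real.sin v * Real.exp (-(v * τ)))
      ((volume.restrict (Set.Ioc (0:ℝ) R)).prod (volume.restrict (Set.Ioi (0:ℝ)))) := by
    exact Continuous.aestronglyMeasurable (by fun_prop)
  have hint : Integrable (Function.uncurry fun v τ => Real.sin v * Real.exp (-(v * τ)))
      ((volume.restrict (Set.Ioc (0:ℝ) R)).prod (volume.restrict (Set.Ioi (0:ℝ)))) := by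
    rw [integrable_prod_iff hmeas]
    constructor
    · filter_upwards [ae_restrict_mem measurableSet_Ioc] with v hv
      have := (exp_neg_integrableOn_Ioi 0 hv.1).const_mul (Real.sin v)
      simpa [neg_mul] using this
    · have heq : ∀ v ∈ Set.Ioc (0:ℝ) R,
          (∫ τ in Set.Ioi (0:ℝ), ‖Real.sin v * Real.exp (-(v * τ))‖) = |Real.sin v| * v⁻¹ := by
        intro v hv
        have h1 : ∀ τ : ℝ, ‖Real.sin v * Real.exp (-(v * τ))‖ =
            |Real.sin v| * Real.exp (-(v * τ)) := by
          intro τ; rw [Real.norm_eq_abs, abs_mul, Real.abs_exp]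
        simp_rw [h1]
        rw [integral_const_mul, exp_neg_mul_integral hv.1]
      refine Integrable.mono'
        (integrableOn_const (C := (1:ℝ)) measure_Ioc_lt_top.ne) ?_ ?_
      · exact hmeas.norm.integral_prod_right'
      · filter_upwards [ae_restrict_mem measurableSet_Ioc] with v hv
        rw [Real.norm_eq_abs]
        simp only [Function.uncurry]
        rw [heq v hv]
        have h2 : |Real.sin v| * v⁻¹ = |sinc v| := by
          rw [sinc, abs_div, abs_of_pos hv.1, div_eq_mul_inv]
        rw [abs_of_nonneg (mul_nonneg (abs_nonneg _) (inv_nonneg.2 hv.1.le)), h2]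
        exact sinc_abs_le_one v
  have hswap := integral_integral_swap hint
  have step1 : Si R = ∫ v in Set.Ioc (0:ℝ) R, sinc v := by
    rw [Si, intervalIntegral.integral_of_le hR.le]
  have step2 : ∫ v in Set.Ioc (0:ℝ) R, sinc v =
      ∫ v in Set.Ioc (0:ℝ) R, ∫ τ in Set.Ioi (0:ℝ), Real.sin v * Real.exp (-(v * τ)) := by
    refine setIntegral_congr_fun measurableSet_Ioc (fun v hv => ?_)
    rw [integral_const_mul, exp_neg_mul_integral hv.1, sinc, div_eq_mul_inv]
  have step3 : ∀ τ : ℝ,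
      (∫ v in Set.Ioc (0:ℝ) R, Real.sin v * Real.exp (-(v * τ))) =
        (1 - Real.exp (-(τ * R)) * (Real.cos R + τ * Real.sin R)) / (1 + τ ^ 2) := by
    intro τ
    rw [← intervalIntegral.integral_of_le hR.le,
      show (fun v => Real.sin v * Real.exp (-(v * τ))) =
        (fun v => Real.sin v * Real.exp (-(τ * v))) from funext fun v => by rw [mul_comm v τ]]
    exact inner_exp τ R
  rw [step1, step2, hswap]
  simp_rw [step3]
  have hsplit : ∀ τ : ℝ,
      (1 - Real.exp (-(τ * R)) * (Real.cos R + τ * Real.sin R)) / (1 + τ ^ 2) =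
        (1 + τ ^ 2)⁻¹ - Real.exp (-(τ * R)) * (Real.cos R + τ * Real.sin R) / (1 + τ ^ 2) := by
    intro τ
    rw [sub_div, one_div]
  simp_rw [hsplit]
  rw [integral_sub integrable_inv_one_add_sq.integrableOn (E_integrable hR),
    integral_Ioi_inv_one_add_sq]
  simp

lemma Si_sub_le {R : ℝ} (hR : 0 < R) : |Si R - Real.pi / 2| ≤ 2 / R := by
  rw [Si_eq hR]
  have h1 : |Real.pi / 2 - (∫ τ in Set.Ioi (0:ℝ),
      Real.exp (-(τ * R)) * (Real.cos R + τ * Real.sin R) / (1 + τ ^ 2)) - Real.pi / 2|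
      = |∫ τ in Set.Ioi (0:ℝ),
        Real.exp (-(τ * R)) * (Real.cos R + τ * Real.sin R) / (1 + τ ^ 2)| := by
    rw [sub_sub_cancel_left, abs_neg]
  rw [h1]
  have h2 := norm_integral_le_integral_norm (μ := volume.restrict (Set.Ioi (0:ℝ)))
    (f := fun τ => Real.exp (-(τ * R)) * (Real.cos R + τ * Real.sin R) / (1 + τ ^ 2))
  rw [Real.norm_eq_abs] at h2
  refine h2.trans ?_
  have hg : IntegrableOn (fun τ => 2 * Real.exp (-(τ * R))) (Set.Ioi (0:ℝ)) := by
    have := (exp_neg_integrableOn_Ioi 0 hR).const_mul (2:ℝ)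
    simpa [mul_comm, neg_mul, IntegrableOn] using this
  have h3 : (∫ τ in Set.Ioi (0:ℝ),
      ‖Real.exp (-(τ * R)) * (Real.cos R + τ * Real.sin R) / (1 + τ ^ 2)‖) ≤
      ∫ τ in Set.Ioi (0:ℝ), 2 * Real.exp (-(τ * R)) := by
    refine integral_mono_ae (E_integrable hR).norm hg ?_
    filter_upwards [ae_restrict_mem measurableSet_Ioi] with τ hτ
    rw [Real.norm_eq_abs]
    exact E_abs_le R τ hτ
  refine h3.trans ?_
  have : (∫ τ in Set.Ioi (0:ℝ), 2 * Real.exp (-(τ * R))) = 2 * R⁻¹ := by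
    rw [integral_const_mul]
    simp_rw [mul_comm _ R]
    rw [exp_neg_mul_integral hR]
  rw [this, div_eq_mul_inv]


lemma Si_bound (x : ℝ) : |Si x| ≤ 4 := by
  have key : ∀ y : ℝ, 0 ≤ y → |Si y| ≤ 4 := by
    intro y hy
    rcases le_or_gt y 2 with h | h
    · exact (Si_abs_le hy).trans (by linarith)
    · have h1 := Si_sub_le (by linarith : (0:ℝ) < y)
      have h2 : 2 / y ≤ 1 := by
        rw [div_le_one (by linarith)]; linarith
      have h3 : |Si y| ≤ |Si y - Real.pi / 2| + |Real.pi / 2| := by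
        simpa using abs_add_le (Si y - Real.pi / 2) (Real.pi / 2)
      have h4 : |Real.pi / 2| ≤ 2 := by
        rw [abs_of_pos (by positivity)]
        nlinarith [Real.pi_le_four]
      linarith
  rcases le_or_gt 0 x with h | h
  · exact key x h
  · have := key (-x) (by linarith)
    rwa [Si_neg, abs_neg] at this

lemma Si_tendsto_atTop : Tendsto Si atTop (nhds (Real.pi / 2)) := by
  have h1 : Tendsto (fun R : ℝ => 2 / R) atTop (nhds 0) :=
    tendsto_const_nhds.div_atTop tendsto_id
  rw [← sub_zero (Real.pi / 2)] at *
  refine tendsto_of_tendsto_of_tendsto_of_le_of_le'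
    (g := fun R => Real.pi / 2 - 2 / R) (h := fun R => Real.pi / 2 + 2 / R)
    (by simpa using tendsto_const_nhds.sub h1) (by simpa using tendsto_const_nhds.add h1) ?_ ?_
  · filter_upwards [eventually_gt_atTop (0:ℝ)] with R hR
    have := abs_le.1 (Si_sub_le hR)
    linarith [this.1]
  · filter_upwards [eventually_gt_atTop (0:ℝ)] with R hR
    have := abs_le.1 (Si_sub_le hR)
    linarith [this.2]

lemma integral_sin_mul_div (a : ℝ) {b c : ℝ} (hb : 0 < b) (hbc : b ≤ c) :
    ∫ u in b..c, Real.sin (a * u) / u = Si (a * c) - Si (a * b) := by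
  rcases eq_or_ne a 0 with rfl | ha
  · simp [Si]
  · have hcong : ∀ u ∈ Set.uIcc b c, Real.sin (a * u) / u = a * sinc (a * u) := by
      intro u hu
      have hu0 : u ≠ 0 := by
        have := Set.uIcc_of_le hbc ▸ hu
        have : b ≤ u := (Set.mem_Icc.1 this).1
        linarith
      rw [sinc]
      field_simp
    rw [intervalIntegral.integral_congr hcong, intervalIntegral.integral_const_mul,
      intervalIntegral.integral_comp_mul_left _ ha, smul_eq_mul, ← mul_assoc,
      mul_inv_cancel₀ ha, one_mul]
    rw [← intervalIntegral.integral_interval_sub_left (sinc_intervalIntegrable 0 (a*c))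
      (sinc_intervalIntegrable 0 (a*b))]
    rfl

lemma Si_zero : Si 0 = 0 := by
  rw [Si, intervalIntegral.integral_same]

lemma cos_sub_cos' (x y : ℝ) :
    Real.cos (x - y) - Real.cos (x + y) = 2 * Real.sin x * Real.sin y := by
  rw [Real.cos_sub, Real.cos_add]; ring

lemma hkey_lemma {Ω : Type*} [MeasurableSpace Ω] (P : Measure Ω) [IsProbabilityMeasure P]
    (X : Ω → ℝ) (hX : Measurable X) (φ : ℝ → ℝ) (hφint : Integrable φ volume)
    (t : ℝ) (hφre : ∀ s : ℝ, φ s = ∫ ω, Real.cos (s * X ω) ∂P)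
    {ε : ℝ} (hε : 0 < ε) :
    (1 / Real.pi) * ((∫ s in Set.Iio (t - ε), φ s / (t - s)) +
        ∫ s in Set.Ioi (t + ε), φ s / (t - s))
      = ∫ ω, Real.sin (t * |X ω|) * (1 - 2 / Real.pi * Si (|X ω| * ε)) ∂P := by
  have hπ : (0:ℝ) < Real.pi := Real.pi_pos
  -- integrability of cosines
  have hcos_int : ∀ c : ℝ, Integrable (fun ω => Real.cos (c * X ω)) P := by
    intro c
    refine (integrable_const (1:ℝ)).mono'
      (Real.measurable_cos.comp (measurable_const.mul hX)).aestronglyMeasurable ?_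
    filter_upwards with ω
    rw [Real.norm_eq_abs]
    exact (Real.abs_cos_le_one _).trans (by norm_num)
  -- integrability of the tails
  have htail : ∀ S : Set ℝ, MeasurableSet S → (∀ s ∈ S, ε ≤ |t - s|) →
      IntegrableOn (fun s => φ s / (t - s)) S := by
    intro S hS hd
    refine Integrable.mono' ((hφint.norm.const_mul (1/ε)).integrableOn) ?_ ?_
    · refine AEStronglyMeasurable.restrict ?_
      have hminv : AEStronglyMeasurable (fun s : ℝ => (t - s)⁻¹) volume :=
        ((measurable_const.sub measurable_id).inv).aestronglyMeasurable
      refine (hφint.aestronglyMeasurable.mul hminv).congr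
        (Eventually.of_forall fun s => ?_)
      simp [div_eq_mul_inv]
    · rw [ae_restrict_iff' hS]
      filter_upwards with s hs
      rw [norm_div, Real.norm_eq_abs, Real.norm_eq_abs, one_div, inv_mul_eq_div]
      exact div_le_div_of_nonneg_left (abs_nonneg _) hε (hd s hs)
  have hIio : IntegrableOn (fun s => φ s / (t - s)) (Set.Iio (t - ε)) := by
    refine htail _ measurableSet_Iio fun s hs => ?_
    rw [Set.mem_Iio] at hs
    rw [abs_of_pos (by linarith)]
    linarith
  have hIoi : IntegrableOn (fun s => φ s / (t - s)) (Set.Ioi (t + ε)) := by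
    refine htail _ measurableSet_Ioi fun s hs => ?_
    rw [Set.mem_Ioi] at hs
    rw [abs_of_neg (by linarith)]
    linarith
  have hnat : Tendsto (fun n : ℕ => (n : ℝ)) atTop atTop := tendsto_natCast_atTop_atTop
  -- truncated integrals converge to the tails
  have hb : Tendsto (fun n : ℕ => ∫ s in (t - ε - (n:ℝ))..(t - ε), φ s / (t - s)) atTop
      (nhds (∫ s in Set.Iio (t - ε), φ s / (t - s))) := by
    rw [← integral_Iic_eq_integral_Iio]
    refine intervalIntegral_tendsto_integral_Iic _
      ((integrableOn_Iic_iff_integrableOn_Iio (by simp)).2 hIio) ?_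
    have h1 : Tendsto (fun n : ℕ => -(n:ℝ)) atTop atBot := tendsto_neg_atBot_iff.2 hnat
    have h2 := tendsto_atBot_add_const_left atTop (t - ε) h1
    refine h2.congr fun n => by ring
  have hc : Tendsto (fun n : ℕ => ∫ s in (t + ε)..(t + ε + (n:ℝ)), φ s / (t - s)) atTop
      (nhds (∫ s in Set.Ioi (t + ε), φ s / (t - s))) := by
    refine intervalIntegral_tendsto_integral_Ioi _ hIoi ?_
    have h2 := tendsto_atTop_add_const_left atTop (t + ε) hnat
    exact h2
  have hseq := hb.add hc
  -- the per-n identity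
  have key : ∀ n : ℕ,
      (∫ s in (t - ε - (n:ℝ))..(t - ε), φ s / (t - s)) +
        (∫ s in (t + ε)..(t + ε + (n:ℝ)), φ s / (t - s)) =
      ∫ ω, 2 * Real.sin (t * X ω) * (Si (X ω * (ε + (n:ℝ))) - Si (X ω * ε)) ∂P := by
    intro n
    have hεn : ε ≤ ε + (n:ℝ) := le_add_of_nonneg_right n.cast_nonneg
    -- substitution u = t - s resp. u = s - t
    have e1 : (∫ s in (t - ε - (n:ℝ))..(t - ε), φ s / (t - s)) =
        ∫ u in ε..(ε + (n:ℝ)), φ (t - u) / u := by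
      have h := intervalIntegral.integral_comp_sub_left (a := ε) (b := ε + (n:ℝ))
        (f := fun s => φ s / (t - s)) t
      rw [show t - (ε + (n:ℝ)) = t - ε - (n:ℝ) by ring] at h
      rw [← h]
      refine intervalIntegral.integral_congr fun u _ => ?_
      rw [sub_sub_cancel]
    have e2 : (∫ s in (t + ε)..(t + ε + (n:ℝ)), φ s / (t - s)) =
        ∫ u in ε..(ε + (n:ℝ)), -(φ (t + u) / u) := by
      have h := intervalIntegral.integral_comp_add_left (a := ε) (b := ε + (n:ℝ))
        (f := fun s => φ s / (t - s)) t
      rw [show t + (ε + (n:ℝ)) = t + ε + (n:ℝ) by ring] at h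
      rw [← h]
      refine intervalIntegral.integral_congr fun u _ => ?_
      rw [show t - (t + u) = -u by ring, div_neg]
    -- interval integrability of the substituted pieces
    have hpiece : ∀ ψ : ℝ → ℝ, Integrable ψ volume →
        IntervalIntegrable (fun u => ψ u / u) volume ε (ε + (n:ℝ)) := by
      intro ψ hψ
      rw [intervalIntegrable_iff_integrableOn_Ioc_of_le hεn]
      refine Integrable.mono' ((hψ.norm.const_mul (1/ε)).integrableOn) ?_ ?_
      · refine AEStronglyMeasurable.restrict ?_
        have hminv : AEStronglyMeasurable (fun u : ℝ => u⁻¹) volume :=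
          measurable_inv.aestronglyMeasurable
        refine (hψ.aestronglyMeasurable.mul hminv).congr
          (Eventually.of_forall fun u => ?_)
        simp [div_eq_mul_inv]
      · rw [ae_restrict_iff' measurableSet_Ioc]
        filter_upwards with u hu
        rw [norm_div, Real.norm_eq_abs, Real.norm_eq_abs, one_div, inv_mul_eq_div]
        refine div_le_div_of_nonneg_left (abs_nonneg _) hε ?_
        rw [abs_of_pos (hε.trans hu.1)]
        exact hu.1.le
    have hi1 : IntervalIntegrable (fun u => φ (t - u) / u) volume ε (ε + (n:ℝ)) :=
      hpiece _ (hφint.comp_sub_left t)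
    have hi2 : IntervalIntegrable (fun u => φ (t + u) / u) volume ε (ε + (n:ℝ)) :=
      hpiece _ (hφint.comp_add_left t)
    rw [e1, e2, intervalIntegral.integral_neg, ← sub_eq_add_neg,
      ← intervalIntegral.integral_sub hi1 hi2]
    -- rewrite the integrand as an integral over Ω
    have e3 : ∀ u : ℝ, φ (t - u) / u - φ (t + u) / u =
        ∫ ω, 2 * Real.sin (t * X ω) * Real.sin (u * X ω) / u ∂P := by
      intro u
      rw [hφre (t - u), hφre (t + u), div_sub_div_same,
        ← integral_sub (hcos_int (t - u)) (hcos_int (t + u)), ← integral_div]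
      refine integral_congr_ae (Eventually.of_forall fun ω => ?_)
      show (Real.cos ((t - u) * X ω) - Real.cos ((t + u) * X ω)) / u = _
      rw [show (t - u) * X ω = t * X ω - u * X ω by ring,
        show (t + u) * X ω = t * X ω + u * X ω by ring, cos_sub_cos']
    rw [intervalIntegral.integral_congr (fun u _ => e3 u)]
    -- Fubini
    have hfin : IsFiniteMeasure (volume.restrict (Set.Ioc ε (ε + (n:ℝ)))) :=
      ⟨by rw [Measure.restrict_apply_univ]; exact measure_Ioc_lt_top⟩
    have hprod : Integrable
        (Function.uncurry fun u ω => 2 * Real.sin (t * X ω) * Real.sin (u * X ω) / u)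
        ((volume.restrict (Set.Ioc ε (ε + (n:ℝ)))).prod P) := by
      have hmeas : Measurable fun p : ℝ × Ω =>
          2 * Real.sin (t * X p.2) * Real.sin (p.1 * X p.2) / p.1 :=
        ((measurable_const.mul
            (Real.measurable_sin.comp (measurable_const.mul (hX.comp measurable_snd)))).mul
          (Real.measurable_sin.comp (measurable_fst.mul (hX.comp measurable_snd)))).div
          measurable_fst
      have hae : ∀ᵐ p ∂((volume.restrict (Set.Ioc ε (ε + (n:ℝ)))).prod P),
          p.1 ∈ Set.Ioc ε (ε + (n:ℝ)) := by
        rw [show P = P.restrict Set.univ by rw [Measure.restrict_univ],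
          Measure.prod_restrict]
        filter_upwards [ae_restrict_mem (measurableSet_Ioc.prod MeasurableSet.univ)] with p hp
        exact hp.1
      refine Integrable.mono' (integrable_const (2/ε)) hmeas.aestronglyMeasurable ?_
      filter_upwards [hae] with p hp
      simp only [Function.uncurry]
      rw [Real.norm_eq_abs, abs_div]
      have h1 : |2 * Real.sin (t * X p.2) * Real.sin (p.1 * X p.2)| ≤ 2 := by
        rw [abs_mul, abs_mul, abs_two]
        nlinarith [Real.abs_sin_le_one (t * X p.2), Real.abs_sin_le_one (p.1 * X p.2),
          abs_nonneg (Real.sin (t * X p.2)), abs_nonneg (Real.sin (p.1 * X p.2))]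
      have h2 : ε ≤ |p.1| := by
        rw [abs_of_pos (hε.trans hp.1)]
        exact hp.1.le
      exact div_le_div₀ (by norm_num) h1 hε h2
    rw [intervalIntegral.integral_of_le hεn]
    rw [integral_integral_swap hprod]
    refine integral_congr_ae (Eventually.of_forall fun ω => ?_)
    show (∫ u in Set.Ioc ε (ε + (n:ℝ)), 2 * Real.sin (t * X ω) * Real.sin (u * X ω) / u) = _
    rw [← intervalIntegral.integral_of_le hεn]
    have hco : ∀ u : ℝ, 2 * Real.sin (t * X ω) * Real.sin (u * X ω) / u
        = (2 * Real.sin (t * X ω)) * (Real.sin (X ω * u) / u) := by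
      intro u; rw [mul_comm u (X ω)]; ring
    rw [intervalIntegral.integral_congr (fun u _ => hco u),
      intervalIntegral.integral_const_mul, integral_sin_mul_div (X ω) hε hεn]
  -- dominated convergence in n for the Ω-integrals
  have hRHS : Tendsto
      (fun n : ℕ => ∫ ω, 2 * Real.sin (t * X ω) * (Si (X ω * (ε + (n:ℝ))) - Si (X ω * ε)) ∂P)
      atTop
      (nhds (∫ ω, Real.pi * (Real.sin (t * |X ω|) * (1 - 2 / Real.pi * Si (|X ω| * ε))) ∂P)) := by
    refine tendsto_integral_filter_of_dominated_convergence (bound := fun _ => (16:ℝ))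
      (Eventually.of_forall fun n => ?_) (Eventually.of_forall fun n => ?_)
      (integrable_const _) ?_
    · exact ((measurable_const.mul
        (Real.measurable_sin.comp (measurable_const.mul hX))).mul
        ((Si_continuous.measurable.comp (hX.mul measurable_const)).sub
          (Si_continuous.measurable.comp (hX.mul measurable_const)))).aestronglyMeasurable
    · filter_upwards with ω
      rw [Real.norm_eq_abs, abs_mul]
      have h1 : |2 * Real.sin (t * X ω)| ≤ 2 := by
        rw [abs_mul, abs_two]
        nlinarith [Real.abs_sin_le_one (t * X ω), abs_nonneg (Real.sin (t * X ω))]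
      have h2 : |Si (X ω * (ε + (n:ℝ))) - Si (X ω * ε)| ≤ 8 := by
        refine (abs_sub _ _).trans ?_
        have := Si_bound (X ω * (ε + (n:ℝ)))
        have := Si_bound (X ω * ε)
        linarith
      nlinarith [abs_nonneg (2 * Real.sin (t * X ω)),
        abs_nonneg (Si (X ω * (ε + (n:ℝ))) - Si (X ω * ε))]
    · filter_upwards with ω
      have hadd : Tendsto (fun n : ℕ => ε + (n:ℝ)) atTop atTop :=
        tendsto_atTop_add_const_left _ ε hnat
      rcases lt_trichotomy (X ω) 0 with hA | hA | hA
      · have h1 : Tendsto (fun n : ℕ => (-X ω) * (ε + (n:ℝ))) atTop atTop :=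
          hadd.const_mul_atTop (by linarith)
        have h2 : Tendsto (fun n : ℕ => Si ((-X ω) * (ε + (n:ℝ)))) atTop
            (nhds (Real.pi / 2)) := Si_tendsto_atTop.comp h1
        have h3 : Tendsto
            (fun n : ℕ => 2 * Real.sin (t * X ω) * (-Si ((-X ω) * (ε + (n:ℝ))) - Si (X ω * ε)))
            atTop (nhds (2 * Real.sin (t * X ω) * (-(Real.pi / 2) - Si (X ω * ε)))) :=
          Tendsto.const_mul _ (h2.neg.sub tendsto_const_nhds)
        have h4 : ∀ n : ℕ, 2 * Real.sin (t * X ω) * (Si (X ω * (ε + (n:ℝ))) - Si (X ω * ε))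
            = 2 * Real.sin (t * X ω) * (-Si ((-X ω) * (ε + (n:ℝ))) - Si (X ω * ε)) := by
          intro n
          rw [show X ω * (ε + (n:ℝ)) = -((-X ω) * (ε + (n:ℝ))) by ring, Si_neg]
        have h5 : Real.pi * (Real.sin (t * |X ω|) * (1 - 2 / Real.pi * Si (|X ω| * ε)))
            = 2 * Real.sin (t * X ω) * (-(Real.pi / 2) - Si (X ω * ε)) := by
          rw [abs_of_neg hA, show (-X ω) * ε = -(X ω * ε) by ring, Si_neg, mul_neg,
            Real.sin_neg]
          field_simp
          ring
        rw [h5]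
        exact Tendsto.congr (fun n => (h4 n).symm) h3
      · have : ∀ n : ℕ, 2 * Real.sin (t * X ω) * (Si (X ω * (ε + (n:ℝ))) - Si (X ω * ε))
            = Real.pi * (Real.sin (t * |X ω|) * (1 - 2 / Real.pi * Si (|X ω| * ε))) := by
          intro n
          rw [hA]
          simp [Si_zero]
        rw [show Real.pi * (Real.sin (t * |X ω|) * (1 - 2 / Real.pi * Si (|X ω| * ε)))
          = 2 * Real.sin (t * X ω) * (Si (X ω * (ε + (0:ℕ):ℝ)) - Si (X ω * ε)) from (this 0).symm]
        exact tendsto_const_nhds.congr fun n => by rw [this n, ← this 0]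
      · have h1 : Tendsto (fun n : ℕ => X ω * (ε + (n:ℝ))) atTop atTop :=
          hadd.const_mul_atTop hA
        have h2 : Tendsto (fun n : ℕ => Si (X ω * (ε + (n:ℝ)))) atTop
            (nhds (Real.pi / 2)) := Si_tendsto_atTop.comp h1
        have h3 : Tendsto
            (fun n : ℕ => 2 * Real.sin (t * X ω) * (Si (X ω * (ε + (n:ℝ))) - Si (X ω * ε)))
            atTop (nhds (2 * Real.sin (t * X ω) * (Real.pi / 2 - Si (X ω * ε)))) :=
          Tendsto.const_mul _ (h2.sub tendsto_const_nhds)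
        have h5 : Real.pi * (Real.sin (t * |X ω|) * (1 - 2 / Real.pi * Si (|X ω| * ε)))
            = 2 * Real.sin (t * X ω) * (Real.pi / 2 - Si (X ω * ε)) := by
          rw [abs_of_pos hA]
          field_simp
        rw [h5]
        exact h3
  have huniq := tendsto_nhds_unique (Tendsto.congr key hseq) hRHS
  rw [huniq, integral_const_mul, ← mul_assoc, one_div_mul_cancel hπ.ne', one_mul]

open Complex

theorem charFun_abs_analytic_signal
    {Ω : Type*} [MeasurableSpace Ω] (P : Measure Ω) [IsProbabilityMeasure P]
    (X : Ω → ℝ) (hX : Measurable X)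
    (hsymm : Measure.map (fun ω => -X ω) P = Measure.map X P)
    (φ : ℝ → ℝ)
    (hφ : ∀ t : ℝ, (φ t : ℂ) = ∫ ω, Complex.exp (Complex.I * t * X ω) ∂P)
    (hφint : Integrable φ volume) :
    ∀ t : ℝ,
      (∫ ω, Complex.exp (Complex.I * t * |X ω|) ∂P).re = φ t ∧
      Tendsto
        (fun ε : ℝ =>
          (1 / Real.pi) *
            ((∫ s in Set.Iio (t - ε), φ s / (t - s)) +
              ∫ s in Set.Ioi (t + ε), φ s / (t - s)))
        (nhdsWithin 0 (Set.Ioi 0))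
        (nhds ((∫ ω, Complex.exp (Complex.I * t * |X ω|) ∂P).im)) := by
  intro t
  have hre' : ∀ (c r : ℝ), (Complex.exp (Complex.I * c * r)).re = Real.cos (c * r) := by
    intro c r
    rw [show Complex.I * c * r = ((c * r : ℝ) : ℂ) * Complex.I by push_cast; ring]
    exact Complex.exp_ofReal_mul_I_re _
  have him' : ∀ (c r : ℝ), (Complex.exp (Complex.I * c * r)).im = Real.sin (c * r) := by
    intro c r
    rw [show Complex.I * c * r = ((c * r : ℝ) : ℂ) * Complex.I by push_cast; ring]
    exact Complex.exp_ofReal_mul_I_im _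
  have hintC : ∀ (c : ℝ) (g : Ω → ℝ), Measurable g →
      Integrable (fun ω => Complex.exp (Complex.I * c * g ω)) P := by
    intro c g hg
    have hm : Measurable fun ω => Complex.exp (Complex.I * c * g ω) :=
      Complex.measurable_exp.comp (measurable_const.mul (Complex.measurable_ofReal.comp hg))
    refine (integrable_const (1:ℝ)).mono' hm.aestronglyMeasurable ?_
    filter_upwards with ω
    rw [Complex.norm_exp]
    simp
  have hre_int : ∀ (c : ℝ) (g : Ω → ℝ), Measurable g →
      (∫ ω, Complex.exp (Complex.I * c * g ω) ∂P).re = ∫ ω, Real.cos (c * g ω) ∂P ∧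
      (∫ ω, Complex.exp (Complex.I * c * g ω) ∂P).im = ∫ ω, Real.sin (c * g ω) ∂P := by
    intro c g hg
    have h1 := integral_re (hintC c g hg)
    have h2 := integral_im (hintC c g hg)
    rw [RCLike.re_eq_complex_re] at h1
    rw [RCLike.im_eq_complex_im] at h2
    constructor
    · rw [← h1]
      exact (integral_congr_ae (Eventually.of_forall fun ω => by
        simp only [hre' c (g ω)])).symm
    · rw [← h2]
      exact (integral_congr_ae (Eventually.of_forall fun ω => by
        simp only [him' c (g ω)])).symm
  have hφre : ∀ s : ℝ, φ s = ∫ ω, Real.cos (s * X ω) ∂P := by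
    intro s
    have h := congrArg Complex.re (hφ s)
    rwa [Complex.ofReal_re, (hre_int s X hX).1] at h
  have h_absX : Measurable fun ω => |X ω| := hX.abs
  have h_re_abs : (∫ ω, Complex.exp (Complex.I * t * |X ω|) ∂P).re = φ t := by
    rw [(hre_int t _ h_absX).1, hφre t]
    refine integral_congr_ae (Eventually.of_forall fun ω => ?_)
    show Real.cos (t * |X ω|) = Real.cos (t * X ω)
    rcases abs_choice (X ω) with h | h
    · rw [h]
    · rw [h, mul_neg, Real.cos_neg]
  refine ⟨h_re_abs, ?_⟩
  rw [(hre_int t _ h_absX).2]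
  -- dominated convergence as ε → 0⁺
  have hmeasW : ∀ ε : ℝ, AEStronglyMeasurable
      (fun ω => Real.sin (t * |X ω|) * (1 - 2 / Real.pi * Si (|X ω| * ε))) P := by
    intro ε
    exact ((Real.measurable_sin.comp (measurable_const.mul h_absX)).mul
      (measurable_const.sub (measurable_const.mul
        (Si_continuous.measurable.comp (h_absX.mul measurable_const))))).aestronglyMeasurable
  have hπ : (0:ℝ) < Real.pi := Real.pi_pos
  have hDCT : Tendsto
      (fun ε : ℝ => ∫ ω, Real.sin (t * |X ω|) * (1 - 2 / Real.pi * Si (|X ω| * ε)) ∂P)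
      (nhdsWithin 0 (Set.Ioi 0)) (nhds (∫ ω, Real.sin (t * |X ω|) ∂P)) := by
    refine tendsto_integral_filter_of_dominated_convergence (bound := fun _ => (9:ℝ))
      (Eventually.of_forall hmeasW) (Eventually.of_forall fun ε => ?_) (integrable_const _) ?_
    · filter_upwards with ω
      rw [Real.norm_eq_abs, abs_mul]
      have h1 : |Real.sin (t * |X ω|)| ≤ 1 := Real.abs_sin_le_one _
      have h2 : |1 - 2 / Real.pi * Si (|X ω| * ε)| ≤ 9 := by
        have h3 : |2 / Real.pi * Si (|X ω| * ε)| ≤ 8 := by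
          rw [abs_mul]
          have h4 : |2 / Real.pi| ≤ 2 := by
            rw [abs_of_pos (by positivity), div_le_iff₀ hπ]
            nlinarith [Real.pi_gt_three]
          calc |2 / Real.pi| * |Si (|X ω| * ε)| ≤ 2 * 4 := by
                exact mul_le_mul h4 (Si_bound _) (abs_nonneg _) (by norm_num)
            _ = 8 := by norm_num
        calc |1 - 2 / Real.pi * Si (|X ω| * ε)| ≤ |(1:ℝ)| + |2 / Real.pi * Si (|X ω| * ε)| :=
              abs_sub _ _
          _ ≤ 1 + 8 := by rw [abs_one]; linarith
          _ = 9 := by norm_num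
      nlinarith [abs_nonneg (Real.sin (t * |X ω|)), abs_nonneg (1 - 2 / Real.pi * Si (|X ω| * ε))]
    · filter_upwards with ω
      have hS : Tendsto (fun ε : ℝ => Si (|X ω| * ε)) (nhdsWithin 0 (Set.Ioi 0)) (nhds 0) := by
        have hq : Tendsto (fun ε : ℝ => |X ω| * ε) (nhdsWithin 0 (Set.Ioi 0)) (nhds 0) := by
          have hc : Continuous (fun ε : ℝ => |X ω| * ε) := continuous_const.mul continuous_id
          have := Tendsto.mono_left (hc.tendsto (0:ℝ)) (nhdsWithin_le_nhds (s := Set.Ioi (0:ℝ)))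
          simpa using this
        refine squeeze_zero_norm' ?_ hq
        filter_upwards [eventually_mem_nhdsWithin] with ε (hε : ε ∈ Set.Ioi (0:ℝ))
        rw [Real.norm_eq_abs]
        exact Si_abs_le (mul_nonneg (abs_nonneg _) hε.le)
      have hG : Tendsto (fun ε : ℝ => Real.sin (t * |X ω|) * (1 - 2 / Real.pi * Si (|X ω| * ε)))
          (nhdsWithin 0 (Set.Ioi 0)) (nhds (Real.sin (t * |X ω|) * (1 - 2 / Real.pi * 0))) :=
        Tendsto.const_mul _ (Tendsto.sub tendsto_const_nhds (Tendsto.const_mul _ hS))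
      simpa using hG
  refine hDCT.congr' ?_
  filter_upwards [eventually_mem_nhdsWithin] with ε (hε : ε ∈ Set.Ioi (0:ℝ))
  exact (hkey_lemma P X hX φ hφint t hφre hε).symm
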